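/- If X ⊆ ℝⁿ is amenable at x̄ ∈ X (there is an open neighborhood V of x̄, a C¹ map F : V → ℝᵐ, and a closed convex set D ⊆ ℝᵐ with X ∩ V = {x ∈ V : F(x) ∈ D} and N_D(F(x̄)) ∩ ker(∇F(x̄)*) = {0}), then X is nearly convex at x̄: dist(y, x + T_X(x)) = o(‖x−y‖) as x, y → x̄ in X. -/

import Mathlib

open Filter Topology Metric Set

/-- The Bouligand (contingent) tangent cone to `X` at `x`:
limits of `tᵣ⁻¹ • (xᵣ − x)` with `tᵣ ↓ 0`, `xᵣ → x`, `xᵣ ∈ X`. -/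
def bouligandCone {n : ℕ} (X : Set (EuclideanSpace ℝ (Fin n)))
    (x : EuclideanSpace ℝ (Fin n)) : Set (EuclideanSpace ℝ (Fin n)) :=
  {v | ∃ (t : ℕ → ℝ) (y : ℕ → EuclideanSpace ℝ (Fin n)),
    (∀ k, 0 < t k) ∧ Tendsto t atTop (𝓝 0) ∧ (∀ k, y k ∈ X) ∧
    Tendsto y atTop (𝓝 x) ∧
    Tendsto (fun k => (t k)⁻¹ • (y k - x)) atTop (𝓝 v)}

/-- `X` is nearly radial at `xb ∈ X`: `dist(xb, x + T_X(x)) → 0` as `x → xb` in `X`. -/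
def NearlyRadialAt {n : ℕ} (X : Set (EuclideanSpace ℝ (Fin n)))
    (xb : EuclideanSpace ℝ (Fin n)) : Prop :=
  Tendsto (fun x => Metric.infDist xb ((fun v => x + v) '' bouligandCone X x))
    (𝓝[X] xb) (𝓝 0)

/-- `X` is nearly convex at `xb ∈ X`: `dist(y, x + T_X(x)) = o(‖x − y‖)` as `x, y → xb` in `X`. -/
def NearlyConvexAt {n : ℕ} (X : Set (EuclideanSpace ℝ (Fin n)))
    (xb : EuclideanSpace ℝ (Fin n)) : Prop :=
  ∀ ε > (0 : ℝ), ∃ δ > (0 : ℝ), ∀ x ∈ X, ∀ y ∈ X, ‖x - xb‖ < δ → ‖y - xb‖ < δ →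
    Metric.infDist y ((fun v => x + v) '' bouligandCone X x) ≤ ε * ‖x - y‖

open scoped RealInnerProductSpace

/-- The (convex) normal cone to a set `D` at a point `u`. -/
def convexNormalCone {m : ℕ} (D : Set (EuclideanSpace ℝ (Fin m)))
    (u : EuclideanSpace ℝ (Fin m)) : Set (EuclideanSpace ℝ (Fin m)) :=
  {v | ∀ d ∈ D, ⟪v, d - u⟫ ≤ 0}

set_option maxHeartbeats 1600000 in
/-- If `X` is amenable at `xb ∈ X` — there are an open neighbourhood `V` of `xb`, a `C¹`
map `F : V → ℝᵐ` and a closed convex set `D` with `X ∩ V = {x ∈ V : F x ∈ D}` and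
`N_D(F xb) ∩ ker(∇F(xb)*) = {0}` — then `X` is nearly convex at `xb`. -/
theorem amenable_nearlyConvexAt {n m : ℕ} (X : Set (EuclideanSpace ℝ (Fin n)))
    (xb : EuclideanSpace ℝ (Fin n)) (hxb : xb ∈ X)
    (V : Set (EuclideanSpace ℝ (Fin n))) (hV : IsOpen V) (hxbV : xb ∈ V)
    (F : EuclideanSpace ℝ (Fin n) → EuclideanSpace ℝ (Fin m))
    (hF : ContDiffOn ℝ 1 F V)
    (D : Set (EuclideanSpace ℝ (Fin m))) (hD : IsClosed D) (hDconv : Convex ℝ D)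
    (hXV : X ∩ V = {x ∈ V | F x ∈ D})
    (hconstraint : ∀ v ∈ convexNormalCone D (F xb),
      ContinuousLinearMap.adjoint (fderiv ℝ F xb) v = 0 → v = 0) :
    NearlyConvexAt X xb := by
  classical
  set A := fderiv ℝ F xb with hA
  have hFxbD : F xb ∈ D := by
    have h : xb ∈ X ∩ V := ⟨hxb, hxbV⟩
    rw [hXV] at h
    exact h.2
  have hDne : D.Nonempty := ⟨F xb, hFxbD⟩
  have hmemX : ∀ z, z ∈ V → F z ∈ D → z ∈ X := by
    intro z h1 h2
    have : z ∈ X ∩ V := by rw [hXV]; exact ⟨h1, h2⟩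
    exact this.1
  have hmemD : ∀ z, z ∈ X → z ∈ V → F z ∈ D := by
    intro z h1 h2
    have h : z ∈ X ∩ V := ⟨h1, h2⟩
    rw [hXV] at h
    exact h.2
  -- projection onto D
  have proj_ex : ∀ u : EuclideanSpace ℝ (Fin m), ∃ p, p ∈ D ∧ ‖u - p‖ = infDist u D ∧
      ∀ d ∈ D, ⟪u - p, d - p⟫ ≤ 0 := by
    intro u
    obtain ⟨p, hpD, hp⟩ := exists_norm_eq_iInf_of_complete_convex hDne hD.isComplete hDconv u
    refine ⟨p, hpD, ?_, (norm_eq_iInf_iff_real_inner_le_zero hDconv hpD).mp hp⟩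
    rw [hp, Metric.infDist_eq_iInf]
    simp [dist_eq_norm]
  choose pr hprD hprdist hprN using proj_ex
  -- differentiability facts
  have hdiff : ∀ z ∈ V, HasFDerivAt F (fderiv ℝ F z) z := by
    intro z hz
    exact ((hF.differentiableOn one_ne_zero).differentiableAt (hV.mem_nhds hz)).hasFDerivAt
  have hball : ∀ ε > (0:ℝ), ∃ δ > (0:ℝ), Metric.ball xb δ ⊆ V ∧
      ∀ z ∈ Metric.ball xb δ, ‖fderiv ℝ F z - A‖ ≤ ε := by
    intro ε hε
    have hcont : ContinuousAt (fun z => fderiv ℝ F z) xb :=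
      (hF.continuousOn_fderiv_of_isOpen hV le_rfl).continuousAt (hV.mem_nhds hxbV)
    have h1 : ∀ᶠ z in 𝓝 xb, ‖fderiv ℝ F z - A‖ ≤ ε := by
      have h2 : Metric.closedBall A ε ∈ 𝓝 A := Metric.closedBall_mem_nhds A hε
      have h3 := hcont.preimage_mem_nhds h2
      filter_upwards [h3] with z hz
      rw [Set.mem_preimage, Metric.mem_closedBall, dist_eq_norm] at hz
      exact hz
    have h4 : V ∩ {z | ‖fderiv ℝ F z - A‖ ≤ ε} ∈ 𝓝 xb :=
      Filter.inter_mem (hV.mem_nhds hxbV) h1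
    obtain ⟨δ, hδ0, hδ⟩ := Metric.mem_nhds_iff.mp h4
    exact ⟨δ, hδ0, fun z hz => (hδ hz).1, fun z hz => (hδ hz).2⟩
  have hEstGen : ∀ (ε δ : ℝ), Metric.ball xb δ ⊆ V →
      (∀ z ∈ Metric.ball xb δ, ‖fderiv ℝ F z - A‖ ≤ ε) →
      ∀ a ∈ Metric.ball xb δ, ∀ b ∈ Metric.ball xb δ,
        ‖F b - F a - A (b - a)‖ ≤ ε * ‖b - a‖ := by
    intro ε δ hsub hbd a ha b hb
    exact (convex_ball xb δ).norm_image_sub_le_of_norm_hasFDerivWithin_le'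
      (fun z hz => (hdiff z (hsub hz)).hasFDerivWithinAt) hbd ha hb
  -- uniform constraint qualification
  obtain ⟨c, hc0, hc1, hCQ⟩ :
      ∃ c, 0 < c ∧ c ≤ 1 ∧ ∀ p ∈ D, ‖p - F xb‖ ≤ c →
        ∀ u ∈ convexNormalCone D p, c * ‖u‖ ≤ ‖ContinuousLinearMap.adjoint A u‖ := by
    have key : ∃ c, 0 < c ∧ ∀ p ∈ D, ‖p - F xb‖ ≤ c →
        ∀ u ∈ convexNormalCone D p, c * ‖u‖ ≤ ‖ContinuousLinearMap.adjoint A u‖ := by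
      by_contra hcon
      push_neg at hcon
      have h1 : ∀ k : ℕ, ∃ p u, p ∈ D ∧ ‖p - F xb‖ ≤ 1/(k+1) ∧
          u ∈ convexNormalCone D p ∧
          ‖ContinuousLinearMap.adjoint A u‖ < (1/(k+1)) * ‖u‖ := by
        intro k
        have hk : (0:ℝ) < 1/(k+1) := by positivity
        obtain ⟨p, hp1, hp2, u, hu1, hu2⟩ := hcon (1/(k+1)) hk
        exact ⟨p, u, hp1, hp2, hu1, hu2⟩
      choose p u hp1 hp2 hu1 hu2 using h1
      have hu0 : ∀ k, u k ≠ 0 := by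
        intro k h
        have := hu2 k
        rw [h] at this
        simp at this
      set w : ℕ → EuclideanSpace ℝ (Fin m) := fun k => ‖u k‖⁻¹ • u k with hwdef
      have hw1 : ∀ k, ‖w k‖ = 1 := by
        intro k
        rw [hwdef]
        simp [norm_smul, inv_mul_cancel₀ (norm_ne_zero_iff.mpr (hu0 k))]
      have hwN : ∀ k, w k ∈ convexNormalCone D (p k) := by
        intro k d hd
        rw [hwdef]
        simp only [real_inner_smul_left]
        exact mul_nonpos_of_nonneg_of_nonpos (by positivity) (hu1 k d hd)
      have hwA : ∀ k, ‖ContinuousLinearMap.adjoint A (w k)‖ ≤ 1/(k+1) := by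
        intro k
        rw [hwdef, map_smul, norm_smul]
        have hn : (0:ℝ) < ‖u k‖ := norm_pos_iff.mpr (hu0 k)
        have := le_of_lt (hu2 k)
        rw [norm_inv, norm_norm]
        rw [show (1:ℝ)/(k+1) = ‖u k‖⁻¹ * ((1/(k+1)) * ‖u k‖) by field_simp]
        exact mul_le_mul_of_nonneg_left this (by positivity)
      have hsph : ∀ k, w k ∈ Metric.sphere (0 : EuclideanSpace ℝ (Fin m)) 1 := by
        intro k
        simp [Metric.mem_sphere, dist_eq_norm, hw1 k]
      obtain ⟨wInf, hwInf, φ, hφ, hwlim⟩ :=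
        (isCompact_sphere (0 : EuclideanSpace ℝ (Fin m)) 1).tendsto_subseq hsph
      have hwInf1 : ‖wInf‖ = 1 := by
        simpa [dist_eq_norm] using hwInf
      have hone : Tendsto (fun j => 1/((φ j : ℝ)+1)) atTop (𝓝 0) := by
        have h0 : Tendsto (fun k : ℕ => 1/((k:ℝ)+1)) atTop (𝓝 0) :=
          tendsto_one_div_add_atTop_nhds_zero_nat
        exact h0.comp hφ.tendsto_atTop
      have hplim : Tendsto (fun j => p (φ j)) atTop (𝓝 (F xb)) := by
        rw [tendsto_iff_dist_tendsto_zero]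
        apply squeeze_zero (fun j => dist_nonneg)
          (fun j => by rw [dist_eq_norm]; exact hp2 (φ j)) hone
      have hwlim' : Tendsto (fun j => w (φ j)) atTop (𝓝 wInf) := hwlim
      have hAzero : ContinuousLinearMap.adjoint A wInf = 0 := by
        have hc : Tendsto (fun j => ‖ContinuousLinearMap.adjoint A (w (φ j))‖) atTop
            (𝓝 ‖ContinuousLinearMap.adjoint A wInf‖) :=
          ((ContinuousLinearMap.adjoint A).continuous.tendsto _).comp hwlim' |>.norm
        have hle : ‖ContinuousLinearMap.adjoint A wInf‖ ≤ 0 :=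
          le_of_tendsto_of_tendsto' hc hone (fun j => hwA (φ j))
        rw [← norm_le_zero_iff]
        exact hle
      have hN : wInf ∈ convexNormalCone D (F xb) := by
        intro d hd
        have hc : Tendsto (fun j => ⟪w (φ j), d - p (φ j)⟫) atTop
            (𝓝 ⟪wInf, d - F xb⟫) :=
          Tendsto.inner hwlim' (tendsto_const_nhds.sub hplim)
        exact le_of_tendsto hc (Filter.Eventually.of_forall fun j => hwN (φ j) d hd)
      have := hconstraint wInf hN hAzero
      rw [this] at hwInf1
      simp at hwInf1
    obtain ⟨c, hc0, hc⟩ := key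
    refine ⟨min c 1, lt_min hc0 one_pos, min_le_right _ _, ?_⟩
    intro p hp hpc u hu
    have h1 : c * ‖u‖ ≤ ‖ContinuousLinearMap.adjoint A u‖ :=
      hc p hp (hpc.trans (min_le_left _ _)) u hu
    have h2 : min c 1 * ‖u‖ ≤ c * ‖u‖ :=
      mul_le_mul_of_nonneg_right (min_le_left _ _) (norm_nonneg _)
    linarith
  -- constants
  set M : ℝ := max ‖A‖ 1 with hMdef
  have hM1 : (1:ℝ) ≤ M := le_max_right _ _
  have hM0 : (0:ℝ) < M := lt_of_lt_of_le one_pos hM1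
  have hMA : ‖A‖ ≤ M := le_max_left _ _
  have hcM : c ≤ M := hc1.trans hM1
  set q : ℝ := Real.sqrt (1 - c^2/M^2) with hqdef
  have hq_sq : q^2 = 1 - c^2/M^2 := by
    rw [hqdef, Real.sq_sqrt]
    have h2 : c^2 ≤ M^2 := by nlinarith
    have hM2 : (0:ℝ) < M^2 := by positivity
    rw [sub_nonneg, div_le_one hM2]
    exact h2
  have hq0 : 0 ≤ q := Real.sqrt_nonneg _
  have hq1 : q < 1 := by
    have h2 : q^2 < 1 := by
      rw [hq_sq]
      have : 0 < c^2/M^2 := by positivity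
      linarith
    nlinarith
  set θ : ℝ := (1+q)/2 with hθdef
  have hθ0 : 0 < θ := by rw [hθdef]; linarith
  have hθ1 : θ < 1 := by rw [hθdef]; linarith
  have hqθ : q < θ := by rw [hθdef]; linarith
  set ε₁ : ℝ := M * (θ - q) with hε₁def
  have hε₁0 : 0 < ε₁ := by
    apply mul_pos hM0; linarith
  set κ : ℝ := 1 / (M * (1 - θ)) with hκdef
  have hκ0 : 0 < κ := by
    rw [hκdef]
    have : 0 < M * (1-θ) := by apply mul_pos hM0; linarith
    positivity
  have hκM : κ * (1 - θ) = 1 / M := by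
    rw [hκdef]
    have h1 : (1:ℝ) - θ ≠ 0 := by intro h; rw [sub_eq_zero] at h; exact absurd h.symm (ne_of_lt hθ1)
    field_simp
  -- the ball where the iteration works
  set ε₁' : ℝ := min ε₁ M with hε₁'def
  have hε₁'0 : 0 < ε₁' := lt_min hε₁0 hM0
  obtain ⟨δ', hδ'0, hδ'V, hδ'bd⟩ := hball ε₁' hε₁'0
  have hLip : ∀ a ∈ Metric.ball xb δ', ∀ b ∈ Metric.ball xb δ',
      ‖F b - F a‖ ≤ 2*M*‖b - a‖ := by
    intro a ha b hb
    have h1 := hEstGen ε₁' δ' hδ'V hδ'bd a ha b hb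
    have h2 : ‖A (b - a)‖ ≤ M * ‖b - a‖ :=
      le_trans (A.le_opNorm _) (by gcongr)
    have h3 : ‖F b - F a‖ ≤ ‖F b - F a - A (b - a)‖ + ‖A (b - a)‖ := by
      have h4 := norm_add_le (F b - F a - A (b - a)) (A (b - a))
      simpa using h4
    have hε₁'M : ε₁' ≤ M := min_le_right _ _
    have h5 : ε₁' * ‖b - a‖ ≤ M * ‖b - a‖ := mul_le_mul_of_nonneg_right hε₁'M (norm_nonneg _)
    linarith
  -- Step B : local error bound / metric subregularity
  set B : ℝ := 1 + 2*M*κ with hBdef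
  have hB1 : (1:ℝ) ≤ B := by
    rw [hBdef]
    linarith [mul_pos hM0 hκ0]
  have hB0 : (0:ℝ) < B := lt_of_lt_of_le one_pos hB1
  set δB : ℝ := min (δ' / (2*B)) (c / (4*M*B)) with hδBdef
  have hδB0 : 0 < δB := by
    rw [hδBdef]; apply lt_min <;> positivity
  have stepB : ∀ x₀ : EuclideanSpace ℝ (Fin n), ‖x₀ - xb‖ < δB →
      ∃ z ∈ X, ‖z - x₀‖ ≤ κ * infDist (F x₀) D := by
    intro x₀ hx₀
    have hd0 : 0 ≤ ‖x₀ - xb‖ := norm_nonneg _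
    have hδB1 : δB ≤ δ' / (2*B) := min_le_left _ _
    have hδB2 : δB ≤ c / (4*M*B) := min_le_right _ _
    have hδ'2 : δ' / (2*B) ≤ δ' := by
      apply div_le_self hδ'0.le
      linarith only [hB1]
    have hx₀ball : x₀ ∈ Metric.ball xb δ' := by
      rw [Metric.mem_ball, dist_eq_norm]
      linarith only [hx₀, hδB1, hδ'2, hδB0]
    have hxbball : xb ∈ Metric.ball xb δ' := Metric.mem_ball_self hδ'0
    set g₀ : ℝ := infDist (F x₀) D with hg₀def
    have hg₀0 : 0 ≤ g₀ := infDist_nonneg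
    have hg₀ : g₀ ≤ 2*M*‖x₀ - xb‖ := by
      calc g₀ ≤ dist (F x₀) (F xb) := infDist_le_dist_of_mem hFxbD
      _ = ‖F x₀ - F xb‖ := dist_eq_norm _ _
      _ ≤ 2*M*‖x₀ - xb‖ := hLip xb hxbball x₀ hx₀ball
    set stp : EuclideanSpace ℝ (Fin n) → EuclideanSpace ℝ (Fin n) :=
      fun x_ => x_ + (-(M^2)⁻¹) • (ContinuousLinearMap.adjoint A (F x_ - pr (F x_)))
      with hstpdef
    set seq : ℕ → EuclideanSpace ℝ (Fin n) := fun k => stp^[k] x₀ with hseqdef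
    have hseqsucc : ∀ k, seq (k+1) = stp (seq k) := by
      intro k
      rw [hseqdef]
      exact Function.iterate_succ_apply' stp k x₀
    have hAdjnorm : ∀ u : EuclideanSpace ℝ (Fin m),
        ‖ContinuousLinearMap.adjoint A u‖ ≤ M * ‖u‖ := by
      intro u
      calc ‖ContinuousLinearMap.adjoint A u‖ ≤ ‖ContinuousLinearMap.adjoint A‖ * ‖u‖ :=
            (ContinuousLinearMap.adjoint A).le_opNorm u
      _ = ‖A‖ * ‖u‖ := by rw [ContinuousLinearMap.adjoint.norm_map A]
      _ ≤ M * ‖u‖ := mul_le_mul_of_nonneg_right hMA (norm_nonneg _)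
    have hstx : ∀ x_, stp x_ - x_ =
        (-(M^2)⁻¹) • (ContinuousLinearMap.adjoint A (F x_ - pr (F x_))) := by
      intro x_
      simp only [hstpdef, add_sub_cancel_left]
    have hstepnorm : ∀ x_, ‖stp x_ - x_‖ ≤ infDist (F x_) D / M := by
      intro x_
      rw [hstx x_, norm_smul]
      have h2 := hAdjnorm (F x_ - pr (F x_))
      have h3 : ‖(-(M^2)⁻¹ : ℝ)‖ = (M^2)⁻¹ := by
        rw [norm_neg, Real.norm_eq_abs, abs_of_pos (by positivity)]
      rw [h3, ← hprdist (F x_)]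
      calc (M^2)⁻¹ * ‖ContinuousLinearMap.adjoint A (F x_ - pr (F x_))‖
          ≤ (M^2)⁻¹ * (M * ‖F x_ - pr (F x_)‖) :=
            mul_le_mul_of_nonneg_left h2 (by positivity)
      _ = ‖F x_ - pr (F x_)‖ / M := by
          field_simp
    -- the one-step contraction
    have hcontract : ∀ x_, x_ ∈ Metric.ball xb δ' → stp x_ ∈ Metric.ball xb δ' →
        ‖pr (F x_) - F xb‖ ≤ c → infDist (F (stp x_)) D ≤ θ * infDist (F x_) D := by
      intro x_ hx1 hx2 hpc
      set u : EuclideanSpace ℝ (Fin m) := F x_ - pr (F x_) with hudef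
      set Au : EuclideanSpace ℝ (Fin n) := ContinuousLinearMap.adjoint A u with hAudef
      have hu : ‖u‖ = infDist (F x_) D := hprdist _
      have huN : u ∈ convexNormalCone D (pr (F x_)) := fun d hd => hprN _ d hd
      have hCQ' : c * ‖u‖ ≤ ‖Au‖ := hCQ _ (hprD _) hpc u huN
      have hAu1 : ‖Au‖ ≤ M * ‖u‖ := hAdjnorm u
      have hAu2 : ‖A Au‖ ≤ M * ‖Au‖ :=
        le_trans (A.le_opNorm _) (mul_le_mul_of_nonneg_right hMA (norm_nonneg _))
      have hinner : ⟪u, A Au⟫ = ‖Au‖^2 := by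
        rw [real_inner_comm, ← ContinuousLinearMap.adjoint_inner_right A Au u,
          ← hAudef, real_inner_self_eq_norm_sq]
      have hM2 : (0:ℝ) < M^2 := by positivity
      have hMM : (M^2)⁻¹ * M^2 = 1 := inv_mul_cancel₀ (ne_of_gt hM2)
      have f1 : ‖A Au‖^2 ≤ M^2 * ‖Au‖^2 := by
        nlinarith only [hAu2, norm_nonneg (A Au), norm_nonneg Au, mul_nonneg hM0.le (norm_nonneg Au)]
      have f2 : c^2*‖u‖^2 ≤ ‖Au‖^2 := by
        nlinarith only [hCQ', norm_nonneg u, norm_nonneg Au, mul_nonneg hc0.le (norm_nonneg u)]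
      have hsq : ‖u - (M^2)⁻¹ • A Au‖^2 ≤ (q * ‖u‖)^2 := by
        have e1 : ‖u - (M^2)⁻¹ • A Au‖^2
            = ‖u‖^2 - 2 * ((M^2)⁻¹ * ‖Au‖^2) + ((M^2)⁻¹)^2 * ‖A Au‖^2 := by
          rw [norm_sub_sq_real, inner_smul_right, hinner, norm_smul]
          rw [Real.norm_eq_abs, abs_of_pos (show (0:ℝ) < (M^2)⁻¹ by positivity)]
          ring
        have hq2 : (q*‖u‖)^2 = (1 - c^2/M^2)*‖u‖^2 := by rw [mul_pow, hq_sq]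
        rw [e1, hq2]
        have claim1 : ((M^2)⁻¹)^2 * ‖A Au‖^2 ≤ (M^2)⁻¹ * ‖Au‖^2 := by
          calc ((M^2)⁻¹)^2 * ‖A Au‖^2 ≤ ((M^2)⁻¹)^2 * (M^2 * ‖Au‖^2) :=
                mul_le_mul_of_nonneg_left f1 (by positivity)
          _ = ((M^2)⁻¹ * M^2) * ((M^2)⁻¹ * ‖Au‖^2) := by ring
          _ = (M^2)⁻¹ * ‖Au‖^2 := by rw [hMM, one_mul]
        have claim2 : (M^2)⁻¹ * (c^2*‖u‖^2) ≤ (M^2)⁻¹ * ‖Au‖^2 :=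
          mul_le_mul_of_nonneg_left f2 (by positivity)
        have e2 : (1 - c^2/M^2)*‖u‖^2 = ‖u‖^2 - (M^2)⁻¹*(c^2*‖u‖^2) := by
          rw [div_eq_mul_inv]
          ring
        rw [e2]
        linarith only [claim1, claim2]
      have hle : ‖u - (M^2)⁻¹ • A Au‖ ≤ q * ‖u‖ := by
        have h0 : 0 ≤ q * ‖u‖ := mul_nonneg hq0 (norm_nonneg _)
        nlinarith only [norm_nonneg (u - (M^2)⁻¹ • A Au), hsq, h0]
      have hest : ‖F (stp x_) - F x_ - A (stp x_ - x_)‖ ≤ ε₁' * ‖stp x_ - x_‖ :=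
        hEstGen ε₁' δ' hδ'V hδ'bd x_ hx1 (stp x_) hx2
      have hAstep : A (stp x_ - x_) = -((M^2)⁻¹ • A Au) := by
        rw [hstx x_, ← hudef, ← hAudef, map_smul]
        simp [neg_smul]
      have hid : F (stp x_) - pr (F x_) =
          (F (stp x_) - F x_ - A (stp x_ - x_)) + (u - (M^2)⁻¹ • A Au) := by
        rw [hAstep, hudef]
        abel
      have hstn : ‖stp x_ - x_‖ ≤ ‖u‖ / M := by
        rw [hu]
        exact hstepnorm x_
      have hεκ : ε₁' * ‖stp x_ - x_‖ ≤ ε₁ * (‖u‖/M) := by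
        have h1 : ε₁' * ‖stp x_ - x_‖ ≤ ε₁' * (‖u‖/M) :=
          mul_le_mul_of_nonneg_left hstn hε₁'0.le
        have h2 : ε₁' * (‖u‖/M) ≤ ε₁ * (‖u‖/M) :=
          mul_le_mul_of_nonneg_right (min_le_left _ _) (by positivity)
        linarith only [h1, h2]
      calc infDist (F (stp x_)) D ≤ dist (F (stp x_)) (pr (F x_)) :=
            infDist_le_dist_of_mem (hprD _)
      _ = ‖F (stp x_) - pr (F x_)‖ := dist_eq_norm _ _
      _ ≤ ‖F (stp x_) - F x_ - A (stp x_ - x_)‖ + ‖u - (M^2)⁻¹ • A Au‖ := by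
          rw [hid]
          exact norm_add_le _ _
      _ ≤ ε₁ * (‖u‖/M) + q * ‖u‖ := by
          have hadd := add_le_add hest hle
          linarith only [hadd, hεκ]
      _ = θ * ‖u‖ := by
          rw [hε₁def]
          have hMne : M ≠ 0 := ne_of_gt hM0
          field_simp
          ring
      _ = θ * infDist (F x_) D := by rw [hu]
    -- geometric bounds
    have hBd : κ * g₀ + ‖x₀ - xb‖ ≤ B * ‖x₀ - xb‖ := by
      rw [hBdef]
      nlinarith only [mul_le_mul_of_nonneg_left hg₀ hκ0.le, hd0]
    have hBδ : B * ‖x₀ - xb‖ < δ' / 2 := by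
      have h1 : B * ‖x₀ - xb‖ < B * δB := mul_lt_mul_of_pos_left hx₀ hB0
      have h2 : B * δB ≤ B * (δ' / (2*B)) := mul_le_mul_of_nonneg_left hδB1 hB0.le
      have h3 : B * (δ' / (2*B)) = δ' / 2 := by
        field_simp
      calc B * ‖x₀ - xb‖ < B * δB := h1
      _ ≤ B * (δ' / (2*B)) := h2
      _ = δ' / 2 := h3
    have hball_of : ∀ w : EuclideanSpace ℝ (Fin n), ‖w - x₀‖ ≤ κ * g₀ →
        (w ∈ Metric.ball xb δ' ∧ ‖w - xb‖ ≤ B * ‖x₀ - xb‖) := by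
      intro w hw
      have h1 : ‖w - xb‖ ≤ ‖w - x₀‖ + ‖x₀ - xb‖ := by
        have := dist_triangle w x₀ xb
        simpa [dist_eq_norm] using this
      have h2 : ‖w - xb‖ ≤ B * ‖x₀ - xb‖ := by linarith only [h1, hw, hBd]
      refine ⟨?_, h2⟩
      rw [Metric.mem_ball, dist_eq_norm]
      exact lt_of_le_of_lt h2 (lt_trans hBδ (half_lt_self hδ'0))
    -- invariant
    have hinv : ∀ k, ‖seq k - x₀‖ ≤ κ * (1 - θ^k) * g₀ ∧
        infDist (F (seq k)) D ≤ θ^k * g₀ := by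
      intro k
      induction k with
      | zero =>
        constructor
        · rw [hseqdef]
          simp
        · rw [hseqdef]
          simp [hg₀def]
      | succ k ih =>
        have hθk0 : (0:ℝ) ≤ θ^k := le_of_lt (pow_pos hθ0 k)
        have hθk1 : θ^k ≤ 1 := pow_le_one₀ hθ0.le hθ1.le
        have hk1 : ‖seq k - x₀‖ ≤ κ * g₀ := by
          have h1 : κ * (1 - θ^k) * g₀ ≤ κ * g₀ := by
            nlinarith only [mul_nonneg (mul_nonneg hκ0.le hθk0) hg₀0]
          linarith only [ih.1, h1]
        obtain ⟨hballk, hk2⟩ := hball_of (seq k) hk1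
        have hnext : ‖seq (k+1) - seq k‖ ≤ θ^k * g₀ / M := by
          rw [hseqsucc k]
          calc ‖stp (seq k) - seq k‖ ≤ infDist (F (seq k)) D / M := hstepnorm _
          _ ≤ θ^k * g₀ / M := by
              exact div_le_div_of_nonneg_right ih.2 hM0.le
        have hsucc1 : ‖seq (k+1) - x₀‖ ≤ κ * (1 - θ^(k+1)) * g₀ := by
          have h1 : ‖seq (k+1) - x₀‖ ≤ ‖seq (k+1) - seq k‖ + ‖seq k - x₀‖ := by
            have := dist_triangle (seq (k+1)) (seq k) x₀
            simpa [dist_eq_norm] using this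
          have e : θ^k*g₀/M = θ^k*g₀*(κ*(1-θ)) := by rw [hκM]; ring
          have h2 : θ^k * g₀ / M + κ * (1 - θ^k) * g₀ = κ * (1 - θ^(k+1)) * g₀ := by
            rw [e, pow_succ]
            ring
          linarith only [ih.1, hnext, h1, h2]
        have hk1' : ‖seq (k+1) - x₀‖ ≤ κ * g₀ := by
          have hθk0' : (0:ℝ) ≤ θ^(k+1) := le_of_lt (pow_pos hθ0 _)
          have h1 : κ * (1 - θ^(k+1)) * g₀ ≤ κ * g₀ := by
            nlinarith only [mul_nonneg (mul_nonneg hκ0.le hθk0') hg₀0]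
          linarith only [hsucc1, h1]
        obtain ⟨hballk1, _⟩ := hball_of (seq (k+1)) hk1'
        have hpc : ‖pr (F (seq k)) - F xb‖ ≤ c := by
          have h1 : ‖pr (F (seq k)) - F (seq k)‖ = infDist (F (seq k)) D := by
            rw [norm_sub_rev]
            exact hprdist _
          have h2 : ‖pr (F (seq k)) - F xb‖ ≤ ‖pr (F (seq k)) - F (seq k)‖
              + ‖F (seq k) - F xb‖ := by
            have := dist_triangle (pr (F (seq k))) (F (seq k)) (F xb)
            simpa [dist_eq_norm] using this
          have h3 : ‖F (seq k) - F xb‖ ≤ 2*M*‖seq k - xb‖ :=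
            hLip xb hxbball (seq k) hballk
          have h4 : infDist (F (seq k)) D ≤ g₀ := by
            have hh := ih.2
            nlinarith only [hh, mul_nonneg hθk0 hg₀0, hg₀0, hθk1]
          have h5 : ‖seq k - xb‖ ≤ B * ‖x₀ - xb‖ := hk2
          have h6 : ‖x₀ - xb‖ ≤ c / (4*M*B) := le_of_lt (lt_of_lt_of_le hx₀ hδB2)
          have h7 : (0:ℝ) < 4*M*B := by positivity
          have h8 : 4*M*B*‖x₀ - xb‖ ≤ c := by
            calc 4*M*B*‖x₀ - xb‖ ≤ 4*M*B*(c/(4*M*B)) :=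
                  mul_le_mul_of_nonneg_left h6 h7.le
            _ = c := by field_simp
          have h9 : 2*M*‖seq k - xb‖ ≤ 2*M*(B*‖x₀-xb‖) :=
            mul_le_mul_of_nonneg_left h5 (by positivity)
          have h10 : infDist (F (seq k)) D ≤ 2*M*‖x₀ - xb‖ := le_trans h4 hg₀
          calc ‖pr (F (seq k)) - F xb‖ ≤ ‖pr (F (seq k)) - F (seq k)‖
              + ‖F (seq k) - F xb‖ := h2
          _ ≤ 2*M*‖x₀ - xb‖ + 2*M*(B*‖x₀ - xb‖) := by
              rw [h1]
              linarith only [h3, h9, h10]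
          _ ≤ c := by
              nlinarith only [h8, mul_nonneg (mul_nonneg (sub_nonneg.mpr hB1) hM0.le) hd0]
        refine ⟨hsucc1, ?_⟩
        rw [hseqsucc k]
        calc infDist (F (stp (seq k))) D ≤ θ * infDist (F (seq k)) D :=
              hcontract (seq k) hballk (by rw [← hseqsucc k]; exact hballk1) hpc
        _ ≤ θ * (θ^k * g₀) := mul_le_mul_of_nonneg_left ih.2 hθ0.le
        _ = θ^(k+1) * g₀ := by rw [pow_succ]; ring
    -- passage to the limit
    have hgeom : ∀ k, dist (seq k) (seq (k+1)) ≤ (g₀/M) * θ^k := by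
      intro k
      rw [dist_eq_norm, norm_sub_rev]
      have h1 : ‖seq (k+1) - seq k‖ ≤ θ^k * g₀ / M := by
        rw [hseqsucc k]
        calc ‖stp (seq k) - seq k‖ ≤ infDist (F (seq k)) D / M := hstepnorm _
        _ ≤ θ^k * g₀ / M := by
            exact div_le_div_of_nonneg_right (hinv k).2 hM0.le
      calc ‖seq (k+1) - seq k‖ ≤ θ^k * g₀ / M := h1
      _ = (g₀/M) * θ^k := by ring
    have hcauchy : CauchySeq seq := cauchySeq_of_le_geometric θ (g₀/M) hθ1 hgeom
    obtain ⟨z, hz⟩ := cauchySeq_tendsto_of_complete hcauchy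
    have hbnd : ∀ k, ‖seq k - x₀‖ ≤ κ * g₀ := by
      intro k
      have hθk0 : (0:ℝ) ≤ θ^k := le_of_lt (pow_pos hθ0 k)
      have h1 : κ * (1 - θ^k) * g₀ ≤ κ * g₀ := by
        nlinarith only [mul_nonneg (mul_nonneg hκ0.le hθk0) hg₀0]
      linarith only [(hinv k).1, h1]
    have hzx₀ : ‖z - x₀‖ ≤ κ * g₀ := by
      have h1 : Tendsto (fun k => ‖seq k - x₀‖) atTop (𝓝 ‖z - x₀‖) :=
        ((hz.sub tendsto_const_nhds).norm)
      exact le_of_tendsto h1 (Filter.Eventually.of_forall hbnd)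
    obtain ⟨hzball, _⟩ := hball_of z hzx₀
    have hzV : z ∈ V := hδ'V hzball
    have hFzD : F z ∈ D := by
      have hcF : ContinuousAt F z := hF.continuousOn.continuousAt (hV.mem_nhds hzV)
      have h1 : Tendsto (fun k => infDist (F (seq k)) D) atTop (𝓝 (infDist (F z) D)) := by
        have h2 : Tendsto (fun x => infDist (F x) D) (𝓝 z) (𝓝 (infDist (F z) D)) :=
          ((Metric.continuous_infDist_pt D).continuousAt).comp hcF
        exact h2.comp hz
      have h2 : Tendsto (fun k => θ^k * g₀) atTop (𝓝 0) := by
        have := (tendsto_pow_atTop_nhds_zero_of_lt_one hθ0.le hθ1).mul_const g₀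
        simpa using this
      have h3 : infDist (F z) D ≤ 0 :=
        le_of_tendsto_of_tendsto' h1 h2 (fun k => (hinv k).2)
      have h4 : infDist (F z) D = 0 := le_antisymm h3 infDist_nonneg
      exact (hD.mem_iff_infDist_zero hDne).mpr h4
    exact ⟨z, hmemX z hzV hFzD, hzx₀⟩
  -- main argument
  intro ε hε
  set ε₂ : ℝ := min 1 (ε / (2*κ)) with hε₂def
  have hε₂0 : 0 < ε₂ := lt_min one_pos (by positivity)
  have hε₂κ : 2*κ*ε₂ ≤ ε := by
    have h1 : ε₂ ≤ ε/(2*κ) := min_le_right _ _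
    have h2 : 2*κ*ε₂ ≤ 2*κ*(ε/(2*κ)) := mul_le_mul_of_nonneg_left h1 (by positivity)
    have h3 : 2*κ*(ε/(2*κ)) = ε := by
      field_simp
    linarith only [h2, h3]
  obtain ⟨δ₂, hδ₂0, hδ₂V, hδ₂bd⟩ := hball ε₂ hε₂0
  refine ⟨min δ₂ δB, lt_min hδ₂0 hδB0, ?_⟩
  intro x hx y hy hxδ hyδ
  have hxδ2 : ‖x - xb‖ < δ₂ := lt_of_lt_of_le hxδ (min_le_left _ _)
  have hyδ2 : ‖y - xb‖ < δ₂ := lt_of_lt_of_le hyδ (min_le_left _ _)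
  have hxδB : ‖x - xb‖ < δB := lt_of_lt_of_le hxδ (min_le_right _ _)
  have hyδB : ‖y - xb‖ < δB := lt_of_lt_of_le hyδ (min_le_right _ _)
  have hxb2 : x ∈ Metric.ball xb δ₂ := by rw [Metric.mem_ball, dist_eq_norm]; exact hxδ2
  have hyb2 : y ∈ Metric.ball xb δ₂ := by rw [Metric.mem_ball, dist_eq_norm]; exact hyδ2
  have hFx : F x ∈ D := hmemD x hx (hδ₂V hxb2)
  have hFy : F y ∈ D := hmemD y hy (hδ₂V hyb2)
  set w : EuclideanSpace ℝ (Fin n) := y - x with hwdef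
  set t : ℕ → ℝ := fun k => (1/2:ℝ)^k with htdef
  have ht0 : ∀ k, 0 < t k := fun k => pow_pos (by norm_num) k
  have ht1 : ∀ k, t k ≤ 1 := fun k => pow_le_one₀ (by norm_num) (by norm_num)
  have htlim : Tendsto t atTop (𝓝 0) :=
    tendsto_pow_atTop_nhds_zero_of_lt_one (by norm_num) (by norm_num)
  -- the segment points
  have hzball : ∀ k, x + (t k) • w ∈ Metric.ball xb δ₂ ∧ ‖(x + (t k) • w) - xb‖ < δB := by
    intro k
    have hid : (x + t k • w) - xb = (1 - t k) • (x - xb) + t k • (y - xb) := by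
      rw [hwdef]
      module
    have h1 : ‖(x + t k • w) - xb‖ ≤ (1 - t k)*‖x - xb‖ + t k*‖y - xb‖ := by
      rw [hid]
      calc ‖(1 - t k) • (x - xb) + t k • (y - xb)‖
          ≤ ‖(1 - t k) • (x - xb)‖ + ‖t k • (y - xb)‖ := norm_add_le _ _
      _ = (1 - t k)*‖x - xb‖ + t k*‖y - xb‖ := by
          rw [norm_smul, norm_smul, Real.norm_eq_abs, Real.norm_eq_abs,
            abs_of_nonneg (by linarith only [ht1 k]), abs_of_nonneg (ht0 k).le]
    constructor
    · rw [Metric.mem_ball, dist_eq_norm]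
      have e1 : (1 - t k)*‖x - xb‖ ≤ (1 - t k)*δ₂ :=
        mul_le_mul_of_nonneg_left (le_of_lt hxδ2) (by linarith only [ht1 k])
      have e2 : t k*‖y - xb‖ < t k*δ₂ := by
        exact mul_lt_mul_of_pos_left hyδ2 (ht0 k)
      linarith only [h1, e1, e2]
    · have e1 : (1 - t k)*‖x - xb‖ ≤ (1 - t k)*δB :=
        mul_le_mul_of_nonneg_left (le_of_lt hxδB) (by linarith only [ht1 k])
      have e2 : t k*‖y - xb‖ < t k*δB := by
        exact mul_lt_mul_of_pos_left hyδB (ht0 k)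
      linarith only [h1, e1, e2]
  -- distance of F along segment to D
  have hdistD : ∀ k, infDist (F (x + t k • w)) D ≤ 2*ε₂*(t k)*‖w‖ := by
    intro k
    have hPmem : (1 - t k) • F x + t k • F y ∈ D :=
      hDconv hFx hFy (by linarith only [ht1 k]) (ht0 k).le (by ring)
    have h1 : infDist (F (x + t k • w)) D
        ≤ ‖F (x + t k • w) - ((1 - t k) • F x + t k • F y)‖ := by
      have h2 : infDist (F (x + t k • w)) D ≤ dist (F (x + t k • w))
          ((1 - t k) • F x + t k • F y) := infDist_le_dist_of_mem hPmem
      rwa [dist_eq_norm] at h2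
    have hza : x + t k • w - x = t k • w := add_sub_cancel_left x _
    have hz2 : x + t k • w ∈ Metric.ball xb δ₂ := (hzball k).1
    have est1 : ‖F (x + t k • w) - F x - A (t k • w)‖ ≤ ε₂ * ‖t k • w‖ := by
      have h3 := hEstGen ε₂ δ₂ hδ₂V hδ₂bd x hxb2 (x + t k • w) hz2
      rwa [hza] at h3
    have est2 : ‖F y - F x - A w‖ ≤ ε₂ * ‖w‖ := by
      have h3 := hEstGen ε₂ δ₂ hδ₂V hδ₂bd x hxb2 y hyb2
      rwa [← hwdef] at h3
    have hid2 : F (x + t k • w) - ((1 - t k) • F x + t k • F y)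
        = (F (x + t k • w) - F x - A (t k • w)) - t k • (F y - F x - A w) := by
      rw [map_smul]
      module
    have hnorm : ‖t k • w‖ = t k * ‖w‖ := by
      rw [norm_smul, Real.norm_eq_abs, abs_of_pos (ht0 k)]
    calc infDist (F (x + t k • w)) D
        ≤ ‖F (x + t k • w) - ((1 - t k) • F x + t k • F y)‖ := h1
    _ ≤ ‖F (x + t k • w) - F x - A (t k • w)‖ + ‖t k • (F y - F x - A w)‖ := by
        rw [hid2]
        exact norm_sub_le _ _
    _ ≤ ε₂ * (t k * ‖w‖) + t k * (ε₂ * ‖w‖) := by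
        have e3 : ‖t k • (F y - F x - A w)‖ = t k * ‖F y - F x - A w‖ := by
          rw [norm_smul, Real.norm_eq_abs, abs_of_pos (ht0 k)]
        rw [e3]
        rw [hnorm] at est1
        have e4 := mul_le_mul_of_nonneg_left est2 (ht0 k).le
        linarith only [est1, e4]
    _ = 2*ε₂*(t k)*‖w‖ := by ring
  -- nearby points of X
  have hXpts : ∀ k, ∃ z ∈ X, ‖z - (x + t k • w)‖ ≤ ε * (t k * ‖w‖) := by
    intro k
    obtain ⟨z, hzX, hzd⟩ := stepB (x + t k • w) (hzball k).2
    refine ⟨z, hzX, ?_⟩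
    calc ‖z - (x + t k • w)‖ ≤ κ * infDist (F (x + t k • w)) D := hzd
    _ ≤ κ * (2*ε₂*(t k)*‖w‖) := mul_le_mul_of_nonneg_left (hdistD k) hκ0.le
    _ ≤ ε * (t k * ‖w‖) := by
        have h1 := mul_le_mul_of_nonneg_right hε₂κ
          (mul_nonneg (ht0 k).le (norm_nonneg w))
        linarith only [h1]
  choose y' hy'X hy'd using hXpts
  set vs : ℕ → EuclideanSpace ℝ (Fin n) := fun k => (t k)⁻¹ • (y' k - x) with hvdef
  have hvw : ∀ k, ‖vs k - w‖ ≤ ε * ‖w‖ := by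
    intro k
    have h0 : y' k - (x + t k • w) = (y' k - x) - t k • w := by abel
    have h1 : vs k - w = (t k)⁻¹ • (y' k - (x + t k • w)) := by
      rw [hvdef, h0, smul_sub, smul_smul, inv_mul_cancel₀ (ne_of_gt (ht0 k)), one_smul]
    rw [h1, norm_smul, Real.norm_eq_abs, abs_inv, abs_of_pos (ht0 k)]
    have h2 := hy'd k
    have h3 : ε * ‖w‖ = (t k)⁻¹ * (ε * (t k * ‖w‖)) := by
      field_simp
      rw [mul_div_cancel_right₀ _ (ne_of_gt (ht0 k))]
    rw [h3]
    exact mul_le_mul_of_nonneg_left h2 (by positivity)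
  have hvb : ∀ k, vs k ∈ Metric.closedBall (0 : EuclideanSpace ℝ (Fin n)) ((1+ε)*‖w‖) := by
    intro k
    rw [Metric.mem_closedBall, dist_zero_right]
    have h1 : ‖vs k‖ ≤ ‖vs k - w‖ + ‖w‖ := by
      calc ‖vs k‖ = ‖(vs k - w) + w‖ := by rw [sub_add_cancel]
      _ ≤ ‖vs k - w‖ + ‖w‖ := norm_add_le _ _
    have h2 := hvw k
    linarith only [h1, h2]
  obtain ⟨vl, hvl_mem, φ, hφ, hvlim⟩ :=
    (isCompact_closedBall (0 : EuclideanSpace ℝ (Fin n)) ((1+ε)*‖w‖)).tendsto_subseq hvb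
  have htφ : Tendsto (fun j => t (φ j)) atTop (𝓝 0) := htlim.comp hφ.tendsto_atTop
  have hyx : ∀ k, y' k = x + t k • vs k := by
    intro k
    rw [hvdef, smul_inv_smul₀ (ne_of_gt (ht0 k)), add_sub_cancel]
  have hcone : vl ∈ bouligandCone X x := by
    refine ⟨fun j => t (φ j), fun j => y' (φ j), fun j => ht0 _, htφ, fun j => hy'X _, ?_, ?_⟩
    · have h1 : Tendsto (fun j => x + t (φ j) • vs (φ j)) atTop (𝓝 (x + (0:ℝ) • vl)) :=
        tendsto_const_nhds.add (Tendsto.smul htφ (hvlim : Tendsto (fun j => vs (φ j)) atTop (𝓝 vl)))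
      rw [zero_smul, add_zero] at h1
      have h2 : (fun j => y' (φ j)) = fun j => x + t (φ j) • vs (φ j) :=
        funext fun j => hyx (φ j)
      rw [h2]
      exact h1
    · exact hvlim
  have hvlw : ‖vl - w‖ ≤ ε * ‖w‖ := by
    have h1 : Tendsto (fun j => ‖vs (φ j) - w‖) atTop (𝓝 ‖vl - w‖) :=
      ((hvlim.sub tendsto_const_nhds).norm)
    exact le_of_tendsto h1 (Filter.Eventually.of_forall fun j => hvw (φ j))
  have hmem2 : x + vl ∈ (fun v0 => x + v0) '' bouligandCone X x := ⟨vl, hcone, rfl⟩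
  calc infDist y ((fun v0 => x + v0) '' bouligandCone X x) ≤ dist y (x + vl) :=
        infDist_le_dist_of_mem hmem2
  _ = ‖y - (x + vl)‖ := dist_eq_norm _ _
  _ = ‖w - vl‖ := by rw [hwdef]; congr 1; abel
  _ = ‖vl - w‖ := norm_sub_rev _ _
  _ ≤ ε * ‖w‖ := hvlw
  _ = ε * ‖x - y‖ := by rw [hwdef, norm_sub_rev]
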